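/- Let r ≥ 2 be an integer and c₀ > 0, C_r ≥ 0. Then there exists a constant C > 0, depending only on r, c₀ and C_r, with the following property. Let N be a positive integer, h = 1/N, and let δ > 0 satisfy c₀ δ < 1/2. Let χ : ℝ² → ℂ be such that for each θ the function ρ ↦ χ(ρ,θ) is C^r, vanishes for |ρ| ≥ c₀ δ, and satisfies |∂_ρ^r χ(ρ,θ)| ≤ C_r δ^{−r} for all (ρ,θ). Then for all θ ∈ [0,2π], all γ ∈ ℝ and all (m₁,m₂) ∈ ℤ² with |m₁| + |m₂| ≤ N/2, the radial quadrature error E := | ∫_ℝ χ(ρ,θ) exp(2πi ρ (m₁ cos θ + m₂ sin θ)) dρ − c(θ) h Σ_{q∈ℤ} χ(γ + q c(θ) h, θ) exp(2πi (γ + q c(θ) h)(m₁ cos θ + m₂ sin θ)) | satisfies E ≤ C δ^{1−r} h^r. -/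

import Mathlib

open Real MeasureTheory FourierTransform Filter Asymptotics Set Function

section StmtSix

private lemma support_iteratedDeriv_subset' (f : ℝ → ℂ) (n : ℕ) :
    Function.support (iteratedDeriv n f) ⊆ tsupport f := by
  induction n with
  | zero => simpa [iteratedDeriv_zero] using subset_tsupport f
  | succ n ih =>
    rw [iteratedDeriv_succ]
    exact support_deriv_subset.trans (closure_minimal ih (isClosed_tsupport f))

private lemma hasCompactSupport_iteratedDeriv' {f : ℝ → ℂ} (hf : HasCompactSupport f) (n : ℕ) :
    HasCompactSupport (iteratedDeriv n f) :=
  IsCompact.of_isClosed_subset hf (isClosed_tsupport _)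
    (closure_minimal (support_iteratedDeriv_subset' f n) (isClosed_tsupport f))

private lemma fourier_decay' {f : ℝ → ℂ} {r : ℕ} (hf : ContDiff ℝ (r : ℕ∞) f)
    (hcs : HasCompactSupport f) {Ir : ℝ}
    (hI : (∫ x : ℝ, ‖iteratedDeriv r f x‖) ≤ Ir) {ξ : ℝ} (hξ : ξ ≠ 0) :
    ‖𝓕 f ξ‖ ≤ Ir / (2 * π * |ξ|) ^ r := by
  have hint : ∀ n : ℕ, (n : ℕ∞) ≤ (r : ℕ∞) → Integrable (iteratedDeriv n f) := by
    intro n hn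
    have hn' : (n : ℕ) ≤ r := by exact_mod_cast hn
    exact (hf.continuous_iteratedDeriv n (by exact_mod_cast hn')).integrable_of_hasCompactSupport
      (hasCompactSupport_iteratedDeriv' hcs n)
  have key := Real.fourier_iteratedDeriv hf hint (le_refl (r : ℕ∞))
  have h1 : ‖𝓕 (iteratedDeriv r f) ξ‖ ≤ Ir :=
    le_trans (VectorFourier.norm_fourierIntegral_le_integral_norm _ _ _ _ _) hI
  rw [key] at h1
  have hnorm : ‖(2 * (π : ℂ) * Complex.I * (ξ : ℂ)) ^ r • 𝓕 f ξ‖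
      = (2 * π * |ξ|) ^ r * ‖𝓕 f ξ‖ := by
    rw [norm_smul, norm_pow]
    congr 2
    simp [Complex.norm_I, Complex.norm_real,
      abs_of_pos pi_pos]
  have hpos : (0:ℝ) < (2 * π * |ξ|) ^ r := by positivity
  rw [le_div_iff₀ hpos, mul_comm]
  calc (2 * π * |ξ|) ^ r * ‖𝓕 f ξ‖ = ‖(2 * (π:ℂ) * Complex.I * (ξ:ℂ)) ^ r • 𝓕 f ξ‖ := hnorm.symm
    _ ≤ Ir := h1

private lemma fourier_affine_mod' (u : ℝ → ℂ) (γ s ω : ℝ) (hs : 0 < s) (ξ : ℝ) :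
    𝓕 (fun x : ℝ => u (γ + s * x) *
        Complex.exp (2 * (π : ℂ) * Complex.I * ((γ + s * x : ℝ) : ℂ) * ((ω : ℝ) : ℂ))) ξ
      = s⁻¹ • (Complex.exp (((2 * π * (γ * ξ / s) : ℝ) : ℂ) * Complex.I) *
          𝓕 u (ξ / s - ω)) := by
  have hs0 : s ≠ 0 := hs.ne'
  rw [Real.fourier_real_eq_integral_exp_smul]
  set G : ℝ → ℂ := fun y : ℝ => Complex.exp (((2 * π * (γ * ξ / s) : ℝ) : ℂ) * Complex.I) *
      (Complex.exp (((-2 * π * y * (ξ / s - ω) : ℝ) : ℂ) * Complex.I) • u y) with hG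
  have key : ∀ x : ℝ,
      Complex.exp (((-2 * π * x * ξ : ℝ) : ℂ) * Complex.I) •
        (u (γ + s * x) *
          Complex.exp (2 * (π : ℂ) * Complex.I * ((γ + s * x : ℝ) : ℂ) * ((ω : ℝ) : ℂ)))
      = G (γ + s * x) := by
    intro x
    have hexp : Complex.exp (((-2 * π * x * ξ : ℝ) : ℂ) * Complex.I) *
        Complex.exp (2 * (π : ℂ) * Complex.I * ((γ + s * x : ℝ) : ℂ) * ((ω : ℝ) : ℂ))
        = Complex.exp (((2 * π * (γ * ξ / s) : ℝ) : ℂ) * Complex.I) *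
          Complex.exp (((-2 * π * (γ + s * x) * (ξ / s - ω) : ℝ) : ℂ) * Complex.I) := by
      rw [← Complex.exp_add, ← Complex.exp_add]
      congr 1
      have hsC : (s:ℂ) ≠ 0 := Complex.ofReal_ne_zero.mpr hs0
      push_cast
      field_simp
      ring
    simp only [hG, smul_eq_mul]
    calc Complex.exp (((-2 * π * x * ξ : ℝ) : ℂ) * Complex.I) *
          (u (γ + s * x) *
            Complex.exp (2 * (π : ℂ) * Complex.I * ((γ + s * x : ℝ) : ℂ) * ((ω : ℝ) : ℂ)))
        = (Complex.exp (((-2 * π * x * ξ : ℝ) : ℂ) * Complex.I) *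
            Complex.exp (2 * (π : ℂ) * Complex.I * ((γ + s * x : ℝ) : ℂ) * ((ω : ℝ) : ℂ))) *
            u (γ + s * x) := by ring
      _ = (Complex.exp (((2 * π * (γ * ξ / s) : ℝ) : ℂ) * Complex.I) *
            Complex.exp (((-2 * π * (γ + s * x) * (ξ / s - ω) : ℝ) : ℂ) * Complex.I)) *
            u (γ + s * x) := by rw [hexp]
      _ = Complex.exp (((2 * π * (γ * ξ / s) : ℝ) : ℂ) * Complex.I) *
          (Complex.exp (((-2 * π * (γ + s * x) * (ξ / s - ω) : ℝ) : ℂ) * Complex.I) *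
            u (γ + s * x)) := by ring
  calc (∫ x : ℝ, Complex.exp (((-2 * π * x * ξ : ℝ) : ℂ) * Complex.I) •
          (u (γ + s * x) *
            Complex.exp (2 * (π : ℂ) * Complex.I * ((γ + s * x : ℝ) : ℂ) * ((ω : ℝ) : ℂ))))
      = ∫ x : ℝ, G (γ + s * x) := integral_congr_ae (.of_forall key)
    _ = |s⁻¹| • ∫ y : ℝ, G (γ + y) :=
        MeasureTheory.Measure.integral_comp_mul_left (fun t : ℝ => G (γ + t)) s
    _ = |s⁻¹| • ∫ y : ℝ, G y := by rw [MeasureTheory.integral_add_left_eq_self G γ]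
    _ = s⁻¹ • (Complex.exp (((2 * π * (γ * ξ / s) : ℝ) : ℂ) * Complex.I) *
          𝓕 u (ξ / s - ω)) := by
        simp only [hG]
        rw [MeasureTheory.integral_const_mul, abs_of_pos (by positivity : (0:ℝ) < s⁻¹),
          Real.fourier_real_eq_integral_exp_smul]

end StmtSix

/-- The angle-dependent weight `c(θ) = min {1/|cos θ|, 1/|sin θ|}`, written as
`(max |cos θ| |sin θ|)⁻¹` (an identical value, avoiding division by zero). -/
noncomputable def cwt (θ : ℝ) : ℝ := (max |Real.cos θ| |Real.sin θ|)⁻¹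

/-- The radial quadrature error
`E = |∫_ℝ χ(ρ,θ) e^{2πiρ(m₁cos θ+m₂sin θ)} dρ
      − c(θ)h Σ_{q∈ℤ} χ(γ+qc(θ)h,θ) e^{2πi(γ+qc(θ)h)(m₁cos θ+m₂sin θ)}|`. -/
noncomputable def radErr (χ : ℝ → ℝ → ℂ) (h θ γ : ℝ) (m₁ m₂ : ℤ) : ℝ :=
  norm
    ((∫ ρ : ℝ, χ ρ θ *
        Complex.exp (2 * (π : ℂ) * Complex.I * ρ *
          ((m₁ : ℂ) * (Real.cos θ : ℂ) + (m₂ : ℂ) * (Real.sin θ : ℂ)))) -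
      (cwt θ : ℂ) * (h : ℂ) * ∑' q : ℤ,
        χ (γ + q * (cwt θ * h)) θ *
          Complex.exp (2 * (π : ℂ) * Complex.I * ((γ + q * (cwt θ * h) : ℝ) : ℂ) *
            ((m₁ : ℂ) * (Real.cos θ : ℂ) + (m₂ : ℂ) * (Real.sin θ : ℂ))))

set_option maxHeartbeats 2000000 in
/-- For `r ≥ 2`, `c₀ > 0`, `C_r ≥ 0` there is `C > 0` such that for all
`N`, `h = 1/N`, `δ` with `c₀δ < 1/2`, all `χ` that are `C^r` in `ρ`, vanish for
`|ρ| ≥ c₀δ` and satisfy `|∂_ρ^r χ| ≤ C_r δ^{−r}`, all `θ ∈ [0,2π]`, `γ ∈ ℝ` and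
`(m₁,m₂)` with `|m₁|+|m₂| ≤ N/2`, the radial quadrature error is bounded by
`C δ^{1−r} h^r`. -/
theorem stmt6 (r : ℕ) (hr : 2 ≤ r) (c₀ Cr : ℝ) (hc₀ : 0 < c₀) (hCr : 0 ≤ Cr) :
    ∃ C > 0, ∀ N : ℕ, 0 < N → ∀ δ : ℝ, 0 < δ → c₀ * δ < 1 / 2 →
      ∀ χ : ℝ → ℝ → ℂ,
        (∀ θ : ℝ, ContDiff ℝ (r : ℕ∞) fun ρ => χ ρ θ) →
        (∀ ρ θ : ℝ, c₀ * δ ≤ |ρ| → χ ρ θ = 0) →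
        (∀ ρ θ : ℝ, norm (iteratedDeriv r (fun ρ' => χ ρ' θ) ρ) ≤ Cr / δ ^ r) →
        ∀ θ ∈ Set.Icc (0 : ℝ) (2 * π), ∀ γ : ℝ, ∀ m₁ m₂ : ℤ,
          ((|m₁| + |m₂| : ℤ) : ℝ) ≤ (N : ℝ) / 2 →
          radErr χ (1 / N) θ γ m₁ m₂ ≤ C * δ ^ ((1 : ℤ) - r) * (1 / N) ^ r := by
  have hSsum0 : Summable (fun n : ℤ => ((n : ℝ) ^ 2)⁻¹) := by
    simpa [one_div] using (summable_one_div_int_pow (p := 2)).mpr one_lt_two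
  set S : ℝ := ∑' n : ℤ, (if n = 0 then (0:ℝ) else ((n : ℝ) ^ 2)⁻¹) with hS_def
  have hSsum : Summable (fun n : ℤ => if n = 0 then (0:ℝ) else ((n : ℝ) ^ 2)⁻¹) := by
    apply Summable.of_norm_bounded hSsum0
    intro n
    rcases eq_or_ne n 0 with hn | hn
    · simp [hn]
    · rw [if_neg hn, Real.norm_eq_abs, abs_of_nonneg (by positivity)]
  have hS0 : (0:ℝ) ≤ S := by
    apply tsum_nonneg
    intro n
    rcases eq_or_ne n 0 with hn | hn
    · simp [hn]
    · rw [if_neg hn]; positivity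
  refine ⟨2 ^ (r + 1) * c₀ * Cr * S + 1, by positivity, ?_⟩
  intro N hN δ hδ hδ2 χ hχs hχv hχd θ hθ γ m₁ m₂ hm
  have hNR : (0:ℝ) < N := by exact_mod_cast hN
  set h : ℝ := 1 / (N : ℝ) with hh_def
  have hh : 0 < h := by rw [hh_def]; exact div_pos one_pos hNR
  set M : ℝ := max |Real.cos θ| |Real.sin θ| with hM_def
  have hM2 : (1:ℝ)/2 ≤ M := by
    nlinarith [sin_sq_add_cos_sq θ, sq_abs (Real.sin θ), sq_abs (Real.cos θ),
      le_max_left |Real.cos θ| |Real.sin θ|, le_max_right |Real.cos θ| |Real.sin θ|,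
      abs_nonneg (Real.sin θ), abs_nonneg (Real.cos θ)]
  have hMpos : 0 < M := lt_of_lt_of_le (by norm_num) hM2
  have hcwt : cwt θ = M⁻¹ := by rw [cwt, hM_def]
  have hcwtpos : 0 < cwt θ := by rw [hcwt]; positivity
  have hcwtle : cwt θ ≤ 2 := by
    rw [hcwt, show (2:ℝ) = ((1:ℝ)/2)⁻¹ by norm_num]
    exact inv_anti₀ (by norm_num) hM2
  set s : ℝ := cwt θ * h with hs_def
  have hs : 0 < s := mul_pos hcwtpos hh
  have hs0 : s ≠ 0 := hs.ne'
  have hs2h : s ≤ 2 * h := mul_le_mul_of_nonneg_right hcwtle hh.le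
  have hsinv : s⁻¹ = M * N := by
    rw [hs_def, hcwt, hh_def, mul_inv, inv_inv, one_div, inv_inv]
  set ω : ℝ := m₁ * Real.cos θ + m₂ * Real.sin θ with hω_def
  have hωb : |ω| ≤ (N:ℝ) * M / 2 := by
    have hm' : |(m₁:ℝ)| + |(m₂:ℝ)| ≤ (N:ℝ)/2 := by push_cast at hm; exact hm
    calc |ω| ≤ |(m₁:ℝ) * Real.cos θ| + |(m₂:ℝ) * Real.sin θ| := abs_add_le _ _
      _ = |(m₁:ℝ)| * |Real.cos θ| + |(m₂:ℝ)| * |Real.sin θ| := by rw [abs_mul, abs_mul]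
      _ ≤ |(m₁:ℝ)| * M + |(m₂:ℝ)| * M := by
          gcongr
          · exact le_max_left _ _
          · exact le_max_right _ _
      _ = (|(m₁:ℝ)| + |(m₂:ℝ)|) * M := by ring
      _ ≤ ((N:ℝ)/2) * M := mul_le_mul_of_nonneg_right hm' hMpos.le
      _ = (N:ℝ) * M / 2 := by ring
  -- the radial profile
  set χθ : ℝ → ℂ := fun ρ => χ ρ θ with hχθ_def
  have hχθs : ContDiff ℝ (r : ℕ∞) χθ := hχs θ
  have hcδ : 0 < c₀ * δ := mul_pos hc₀ hδ
  have hvan : ∀ x : ℝ, x ∉ Set.Icc (-(c₀*δ)) (c₀*δ) → χθ x = 0 := by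
    intro x hx
    apply hχv
    rcases lt_or_ge x (-(c₀*δ)) with hlt | hge
    · rw [abs_of_nonpos (by linarith)]; linarith
    · have hgt : c₀*δ < x := by
        by_contra hc
        push_neg at hc
        exact hx (Set.mem_Icc.mpr ⟨hge, hc⟩)
      rw [abs_of_pos (by linarith)]; linarith
  have hcs : HasCompactSupport χθ := HasCompactSupport.intro isCompact_Icc hvan
  have htsupp : tsupport χθ ⊆ Set.Icc (-(c₀*δ)) (c₀*δ) :=
    closure_minimal (Function.support_subset_iff'.mpr hvan) isClosed_Icc
  have hintr : Integrable (iteratedDeriv r χθ) :=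
    (hχθs.continuous_iteratedDeriv r (by exact_mod_cast le_refl r)).integrable_of_hasCompactSupport
      (hasCompactSupport_iteratedDeriv' hcs r)
  set Ir : ℝ := 2*c₀*δ*(Cr/δ^r) with hIr_def
  have hIr0 : (0:ℝ) ≤ Ir := by rw [hIr_def]; positivity
  have hDbound : (∫ x : ℝ, ‖iteratedDeriv r χθ x‖) ≤ Ir := by
    have hind : ∀ x : ℝ, ‖iteratedDeriv r χθ x‖ ≤
        Set.indicator (Set.Icc (-(c₀*δ)) (c₀*δ)) (fun _ => Cr/δ^r) x := by
      intro x
      by_cases hx : x ∈ Set.Icc (-(c₀*δ)) (c₀*δ)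
      · rw [Set.indicator_of_mem hx]
        have := hχd x θ
        exact this
      · rw [Set.indicator_of_notMem hx]
        have h0 : iteratedDeriv r χθ x = 0 := by
          by_contra h0
          exact hx (htsupp (support_iteratedDeriv_subset' χθ r (Function.mem_support.mpr h0)))
        simp [h0]
    have hint1 : Integrable (fun x => ‖iteratedDeriv r χθ x‖) := hintr.norm
    have hint2 : Integrable (Set.indicator (Set.Icc (-(c₀*δ)) (c₀*δ)) (fun _ => Cr/δ^r)) := by
      rw [integrable_indicator_iff measurableSet_Icc]
      exact integrableOn_const measure_Icc_lt_top.ne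
    calc (∫ x : ℝ, ‖iteratedDeriv r χθ x‖)
        ≤ ∫ x : ℝ, Set.indicator (Set.Icc (-(c₀*δ)) (c₀*δ)) (fun _ => Cr/δ^r) x :=
          integral_mono hint1 hint2 hind
      _ = (volume (Set.Icc (-(c₀*δ)) (c₀*δ))).toReal • (Cr/δ^r) :=
          MeasureTheory.integral_indicator_const _ measurableSet_Icc
      _ = Ir := by
          rw [Real.volume_Icc, ENNReal.toReal_ofReal (by linarith), smul_eq_mul, hIr_def]
          ring
  have hF : ∀ ζ : ℝ, ζ ≠ 0 → ‖𝓕 χθ ζ‖ ≤ Ir / (2*π*|ζ|)^r :=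
    fun ζ hζ => fourier_decay' hχθs hcs hDbound hζ
  -- the full integrand and its rescaled version
  set f : ℝ → ℂ := fun ρ : ℝ =>
    χ ρ θ * Complex.exp (2*(π:ℂ)*Complex.I*((ρ:ℝ):ℂ)*((ω:ℝ):ℂ)) with hf_def
  set g : ℝ → ℂ := fun x : ℝ => f (γ + s * x) with hg_def
  have hFg : ∀ ξ : ℝ, 𝓕 g ξ = s⁻¹ • (Complex.exp (((2*π*(γ*ξ/s) : ℝ):ℂ) * Complex.I) *
      𝓕 χθ (ξ/s - ω)) := by
    intro ξ
    have hgeq : g = fun x : ℝ => χθ (γ + s * x) *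
        Complex.exp (2*(π:ℂ)*Complex.I*((γ + s*x : ℝ):ℂ)*((ω:ℝ):ℂ)) := by
      funext x; rfl
    rw [hgeq, fourier_affine_mod' χθ γ s ω hs ξ]
  have hFgnorm : ∀ ξ : ℝ, ‖𝓕 g ξ‖ = s⁻¹ * ‖𝓕 χθ (ξ/s - ω)‖ := by
    intro ξ
    rw [hFg ξ, norm_smul, norm_mul, Real.norm_eq_abs, abs_of_pos (by positivity : (0:ℝ) < s⁻¹),
      Complex.norm_exp_ofReal_mul_I, one_mul]
  have hkey : ∀ n : ℤ, n ≠ 0 → ‖𝓕 g n‖ ≤ s⁻¹ * (Ir * (s^r * (((n:ℝ))^2)⁻¹)) := by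
    intro n hn
    have hn1 : (1:ℝ) ≤ |(n:ℝ)| := by
      rw [← Int.cast_abs]
      exact_mod_cast Int.one_le_abs hn
    have hζlb : |(n:ℝ)| / (2*s) ≤ |(n:ℝ)/s - ω| := by
      have h1 : |(n:ℝ)/s| - |ω| ≤ |(n:ℝ)/s - ω| := abs_sub_abs_le_abs_sub _ _
      have h2 : |(n:ℝ)/s| = |(n:ℝ)|/s := by rw [abs_div, abs_of_pos hs]
      have h3 : (N:ℝ)*M/2 ≤ |(n:ℝ)|/(2*s) := by
        rw [div_le_div_iff₀ (by norm_num) (by positivity)]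
        have heq : (N:ℝ)*M*(2*s) = 2 * (s⁻¹ * s) := by rw [hsinv]; ring
        rw [heq, inv_mul_cancel₀ hs0, mul_one]
        nlinarith [hn1]
      have h4 : |(n:ℝ)|/s - |(n:ℝ)|/(2*s) = |(n:ℝ)|/(2*s) := by
        field_simp
        ring
      calc |(n:ℝ)|/(2*s) = |(n:ℝ)|/s - |(n:ℝ)|/(2*s) := h4.symm
        _ ≤ |(n:ℝ)/s| - |ω| := by rw [h2]; linarith [hωb, h3]
        _ ≤ |(n:ℝ)/s - ω| := h1
    have hnabs : (0:ℝ) < |(n:ℝ)| := lt_of_lt_of_le one_pos hn1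
    have hζpos : 0 < |(n:ℝ)/s - ω| := lt_of_lt_of_le (by positivity) hζlb
    have hζ0 : (n:ℝ)/s - ω ≠ 0 := abs_pos.mp hζpos
    have hFb := hF _ hζ0
    have hden : ((|(n:ℝ)|)/s)^r ≤ (2*π*|(n:ℝ)/s - ω|)^r := by
      apply pow_le_pow_left₀ (by positivity)
      calc |(n:ℝ)|/s = 2 * (|(n:ℝ)|/(2*s)) := by ring
        _ ≤ 2 * |(n:ℝ)/s - ω| := by linarith [hζlb]
        _ ≤ 2*π*|(n:ℝ)/s - ω| := by nlinarith [pi_gt_three, abs_nonneg ((n:ℝ)/s - ω)]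
    have hstep : Ir / (2*π*|(n:ℝ)/s - ω|)^r ≤ Ir * (s^r * ((n:ℝ)^2)⁻¹) := by
      have h5 : Ir / (2*π*|(n:ℝ)/s - ω|)^r ≤ Ir / ((|(n:ℝ)|)/s)^r := by
        gcongr
      have h6 : Ir / ((|(n:ℝ)|)/s)^r = Ir * (s^r * (|(n:ℝ)|^r)⁻¹) := by
        rw [div_pow, div_div_eq_mul_div, mul_div_assoc, div_eq_mul_inv]
      have h7 : (|(n:ℝ)|^r)⁻¹ ≤ ((n:ℝ)^2)⁻¹ := by
        rw [← sq_abs]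
        have hsq : (0:ℝ) < |(n:ℝ)|^2 := by positivity
        exact inv_anti₀ hsq (pow_le_pow_right₀ hn1 hr)
      calc Ir / (2*π*|(n:ℝ)/s - ω|)^r ≤ Ir / ((|(n:ℝ)|)/s)^r := h5
        _ = Ir * (s^r * (|(n:ℝ)|^r)⁻¹) := h6
        _ ≤ Ir * (s^r * ((n:ℝ)^2)⁻¹) :=
            mul_le_mul_of_nonneg_left (mul_le_mul_of_nonneg_left h7 (by positivity)) hIr0
    calc ‖𝓕 g (n:ℝ)‖ = s⁻¹ * ‖𝓕 χθ ((n:ℝ)/s - ω)‖ := hFgnorm (n:ℝ)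
      _ ≤ s⁻¹ * (Ir / (2*π*|(n:ℝ)/s - ω|)^r) :=
          mul_le_mul_of_nonneg_left hFb (by positivity)
      _ ≤ s⁻¹ * (Ir * (s^r * ((n:ℝ)^2)⁻¹)) :=
          mul_le_mul_of_nonneg_left hstep (by positivity)
  -- continuity / compact support of f and g
  have hexpc : Continuous fun ρ : ℝ => Complex.exp (2*(π:ℂ)*Complex.I*((ρ:ℝ):ℂ)*((ω:ℝ):ℂ)) :=
    Complex.continuous_exp.comp (((continuous_const.mul Complex.continuous_ofReal).mul
      continuous_const))
  have hfc : Continuous f := by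
    rw [hf_def]
    exact (hχθs.continuous).mul hexpc
  have hfcs : HasCompactSupport f := hcs.mul_right
  have hgc : Continuous g := by
    rw [hg_def]
    exact hfc.comp (continuous_const.add (continuous_const.mul continuous_id))
  have hgvan : ∀ x : ℝ, x ∉ Set.Icc ((-(c₀*δ)-γ)/s) ((c₀*δ-γ)/s) → g x = 0 := by
    intro x hx
    have hzero : χ (γ + s*x) θ = 0 := by
      apply hχv
      by_contra hc
      push_neg at hc
      rcases abs_lt.mp hc with ⟨hl, hu⟩
      apply hx
      rw [Set.mem_Icc]
      constructor
      · rw [div_le_iff₀ hs]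
        nlinarith
      · rw [le_div_iff₀ hs]
        nlinarith
    show χ (γ + s*x) θ * _ = 0
    rw [hzero, zero_mul]
  have hgcs : HasCompactSupport g := HasCompactSupport.intro isCompact_Icc hgvan
  have hgev : g =ᶠ[Filter.cocompact ℝ] (fun _ => (0:ℂ)) := by
    filter_upwards [hgcs.compl_mem_cocompact] with x hx
    exact image_eq_zero_of_notMem_tsupport hx
  have hgO : g =O[Filter.cocompact ℝ] (fun x : ℝ => |x| ^ (-(2:ℝ))) :=
    (Asymptotics.isBigO_zero _ _).congr' hgev.symm Filter.EventuallyEq.rfl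
  have hsummable : Summable (fun n : ℤ => 𝓕 g n) := by
    apply Summable.of_norm_bounded_eventually
      (g := fun n : ℤ => (s⁻¹ * (Ir * s^r)) * ((n:ℝ)^2)⁻¹) (hSsum0.mul_left _)
    rw [Filter.eventually_cofinite]
    apply Set.Finite.subset (Set.finite_singleton (0:ℤ))
    intro n hn
    simp only [Set.mem_setOf_eq] at hn
    rw [Set.mem_singleton_iff]
    by_contra hn0
    apply hn
    calc ‖𝓕 g (n:ℝ)‖ ≤ s⁻¹ * (Ir * (s^r * ((n:ℝ)^2)⁻¹)) := hkey n hn0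
      _ = (s⁻¹ * (Ir * s^r)) * ((n:ℝ)^2)⁻¹ := by ring
  have hPoisson := Real.tsum_eq_tsum_fourier_of_rpow_decay_of_summable
    hgc one_lt_two hgO hsummable 0
  have hT : (∑' q : ℤ, g (q:ℝ)) = ∑' n : ℤ, 𝓕 g n := by
    have h1 : (∑' q : ℤ, g ((0:ℝ) + (q:ℝ))) = ∑' q : ℤ, g (q:ℝ) :=
      tsum_congr fun q => by rw [zero_add]
    rw [← h1, hPoisson]
    apply tsum_congr
    intro n
    simp [fourier_coe_apply]
  have hA : (∫ ρ : ℝ, f ρ) = (s:ℂ) * 𝓕 g 0 := by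
    have h0 : 𝓕 g 0 = ∫ x : ℝ, g x := by
      rw [Real.fourier_real_eq_integral_exp_smul]
      apply integral_congr_ae (Filter.Eventually.of_forall fun x => ?_)
      simp
    have h1 : (∫ x : ℝ, g x) = |s⁻¹| • ∫ y : ℝ, f y := by
      calc (∫ x : ℝ, g x) = ∫ x : ℝ, f (γ + s * x) := rfl
        _ = |s⁻¹| • ∫ y : ℝ, (fun t : ℝ => f (γ + t)) y :=
            MeasureTheory.Measure.integral_comp_mul_left (fun t : ℝ => f (γ + t)) s
        _ = |s⁻¹| • ∫ y : ℝ, f y := by rw [MeasureTheory.integral_add_left_eq_self f γ]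
    rw [h0, h1, abs_of_pos (by positivity : (0:ℝ) < s⁻¹), Complex.real_smul, ← mul_assoc,
      ← Complex.ofReal_mul, mul_inv_cancel₀ hs0, Complex.ofReal_one, one_mul]
  have hωc : ((m₁:ℂ) * (Real.cos θ : ℂ) + (m₂:ℂ) * (Real.sin θ : ℂ)) = ((ω:ℝ):ℂ) := by
    rw [hω_def]; push_cast; ring
  have hrad : radErr χ h θ γ m₁ m₂ = ‖(∫ ρ : ℝ, f ρ) - (s:ℂ) * ∑' q : ℤ, g (q:ℝ)‖ := by
    rw [radErr]
    have hInt : (∫ ρ : ℝ, χ ρ θ * Complex.exp (2 * (π : ℂ) * Complex.I * ρ *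
        ((m₁:ℂ) * (Real.cos θ:ℂ) + (m₂:ℂ) * (Real.sin θ:ℂ)))) = ∫ ρ : ℝ, f ρ := by
      apply integral_congr_ae (Filter.Eventually.of_forall fun ρ => ?_)
      rw [hωc, hf_def]
    have hCoef : ((cwt θ : ℝ):ℂ) * ((h : ℝ):ℂ) = ((s:ℝ):ℂ) := by
      rw [← Complex.ofReal_mul, hs_def]
    have hSum : (∑' q : ℤ, χ (γ + (q:ℝ) * (cwt θ * h)) θ *
        Complex.exp (2 * (π:ℂ) * Complex.I * ((γ + (q:ℝ) * (cwt θ * h) : ℝ):ℂ) *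
          ((m₁:ℂ) * (Real.cos θ:ℂ) + (m₂:ℂ) * (Real.sin θ:ℂ)))) = ∑' q : ℤ, g (q:ℝ) := by
      apply tsum_congr
      intro q
      have harg : γ + (q:ℝ) * (cwt θ * h) = γ + s * (q:ℝ) := by rw [hs_def]; ring
      rw [hωc, harg, hg_def, hf_def]
    rw [hInt, hCoef, hSum]
  rw [hrad, hT, hA, Summable.tsum_eq_add_tsum_ite hsummable 0]
  simp only [Int.cast_zero]
  have hsplit : (s:ℂ) * 𝓕 g 0 - (s:ℂ) * (𝓕 g 0 + ∑' n : ℤ, if n = 0 then 0 else 𝓕 g n)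
      = -((s:ℂ) * ∑' n : ℤ, if n = 0 then 0 else 𝓕 g n) := by ring
  rw [hsplit, norm_neg, norm_mul, Complex.norm_real, Real.norm_eq_abs, abs_of_pos hs]
  have hb : ∀ n : ℤ, ‖if n = 0 then (0:ℂ) else 𝓕 g n‖ ≤
      (s⁻¹ * (Ir * s^r)) * (if n = 0 then (0:ℝ) else ((n:ℝ)^2)⁻¹) := by
    intro n
    rcases eq_or_ne n 0 with hn | hn
    · simp [hn]
    · rw [if_neg hn, if_neg hn]
      calc ‖𝓕 g (n:ℝ)‖ ≤ s⁻¹ * (Ir * (s^r * ((n:ℝ)^2)⁻¹)) := hkey n hn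
        _ = (s⁻¹ * (Ir * s^r)) * ((n:ℝ)^2)⁻¹ := by ring
  have hbsum : Summable (fun n : ℤ =>
      (s⁻¹ * (Ir * s^r)) * (if n = 0 then (0:ℝ) else ((n:ℝ)^2)⁻¹)) := hSsum.mul_left _
  have hnsum : Summable (fun n : ℤ => ‖if n = 0 then (0:ℂ) else 𝓕 g n‖) := by
    apply Summable.of_norm_bounded hbsum
    intro n
    rw [Real.norm_eq_abs, abs_of_nonneg (norm_nonneg _)]
    exact hb n
  have hzp : (δ : ℝ) ^ ((1:ℤ) - r) = δ * (δ^r)⁻¹ := by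
    rw [zpow_sub₀ hδ.ne', zpow_one, zpow_natCast, div_eq_mul_inv]
  calc s * ‖∑' n : ℤ, if n = 0 then (0:ℂ) else 𝓕 g n‖
      ≤ s * ∑' n : ℤ, ‖if n = 0 then (0:ℂ) else 𝓕 g n‖ :=
        mul_le_mul_of_nonneg_left (norm_tsum_le_tsum_norm hnsum) hs.le
    _ ≤ s * ∑' n : ℤ, (s⁻¹ * (Ir * s^r)) * (if n = 0 then (0:ℝ) else ((n:ℝ)^2)⁻¹) :=
        mul_le_mul_of_nonneg_left (Summable.tsum_le_tsum hb hnsum hbsum) hs.le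
    _ = s * ((s⁻¹ * (Ir * s^r)) * S) := by rw [tsum_mul_left, ← hS_def]
    _ = Ir * s^r * S := by
        field_simp
    _ ≤ Ir * (2*h)^r * S := by
        have hpow : s^r ≤ (2*h)^r := pow_le_pow_left₀ hs.le hs2h r
        have := mul_le_mul_of_nonneg_right (mul_le_mul_of_nonneg_left hpow hIr0) hS0
        linarith
    _ ≤ (2 ^ (r + 1) * c₀ * Cr * S + 1) * δ ^ ((1:ℤ) - r) * h ^ r := by
        rw [hzp, hIr_def]
        have hLHS : 2*c₀*δ*(Cr/δ^r) * (2*h)^r * S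
            = (2^(r+1)*c₀*Cr*S) * (δ*(δ^r)⁻¹*h^r) := by
          rw [mul_pow, pow_succ]
          field_simp
        rw [hLHS]
        have hpos : (0:ℝ) ≤ δ*(δ^r)⁻¹*h^r := by positivity
        calc (2^(r+1)*c₀*Cr*S) * (δ*(δ^r)⁻¹*h^r)
            ≤ (2^(r+1)*c₀*Cr*S + 1) * (δ*(δ^r)⁻¹*h^r) := by
              apply mul_le_mul_of_nonneg_right (by linarith) hpos
          _ = (2 ^ (r + 1) * c₀ * Cr * S + 1) * (δ * (δ ^ r)⁻¹) * h ^ r := by ring
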